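/- Fix a sign s ∈ {−1, 1} and real numbers μ ≠ 0, ℓ > 0, δ, and set d := 3/ℓ² + μ²/9. Define f, F, G, H : ℝ → ℝ by f(φ) = −s·(2μ/3)e^{−φ} + δe^{−2φ}, F(φ) = −s·(2/3)μδe^{−φ} + (1/4)δ²e^{−2φ} + d, G(φ) = s·(2/3)μδe^{−φ} − (1/2)δ²e^{−2φ}, H(φ) = −δ²e^{−2φ} + s·(2/3)μδe^{−φ}. Then for all φ ∈ ℝ: (i) F′(φ) = G(φ); (ii) G′(φ) = −H(φ); (iii) [dilaton equation, α = 0] H(φ) − 2G(φ) − 2F(φ) + (1/2)e^{2φ}f(φ)² = −6/ℓ²; (iv) [F-equation with c = δ²] s·2μ·e^{3φ}f(φ) + e^{2φ}H(φ) + 2e^{2φ}G(φ) + 3e^{4φ}f(φ)² = δ²; (v) [Kink equation] e^{φ}(F(φ) + G(φ)) + (1/2)e^{3φ}f(φ)² − (2/ℓ²)e^{φ} + (s/(2μ))·(−s·(2μ/3)e^{φ}(F(φ) + G(φ)) + e^{2φ}f(φ)H(φ) + 2e^{2φ}f(φ)G(φ) + 2e^{4φ}f(φ)³) = 0. -/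

import Mathlib

set_option maxHeartbeats 1000000


/-- Case 2 of the paper: `c − δ² = k̃ = α = 0`, locally spacelike or
timelike warped AdS₃. With `|dφ|² = F(φ)`, `D²φ = G(φ)`, `R̄ = H(φ)` and
`f = −s(2μ/3)e^{−φ} + δe^{−2φ}` as displayed, the consistency relations `F′ = G`,
`G′ = −H` and the dilaton, F- and Kink equations of reduced TMG all hold identically
in `φ`. -/
theorem stmt12 (s μ ℓ δ d : ℝ) (hs : s = -1 ∨ s = 1) (hμ : μ ≠ 0) (hℓ : 0 < ℓ)
    (hd : d = 3 / ℓ ^ 2 + μ ^ 2 / 9)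
    (f F G H : ℝ → ℝ)
    (hf : ∀ φ : ℝ, f φ = -s * (2 * μ / 3) * Real.exp (-φ) + δ * Real.exp (-(2 * φ)))
    (hF : ∀ φ : ℝ, F φ = -s * (2 / 3) * μ * δ * Real.exp (-φ) +
      (1 / 4) * δ ^ 2 * Real.exp (-(2 * φ)) + d)
    (hG : ∀ φ : ℝ, G φ = s * (2 / 3) * μ * δ * Real.exp (-φ) -
      (1 / 2) * δ ^ 2 * Real.exp (-(2 * φ)))
    (hH : ∀ φ : ℝ, H φ = -(δ ^ 2) * Real.exp (-(2 * φ)) +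
      s * (2 / 3) * μ * δ * Real.exp (-φ)) :
    ∀ φ : ℝ,
      deriv F φ = G φ ∧
      deriv G φ = -H φ ∧
      H φ - 2 * G φ - 2 * F φ + (1 / 2) * Real.exp (2 * φ) * f φ ^ 2 = -6 / ℓ ^ 2 ∧
      s * 2 * μ * Real.exp (3 * φ) * f φ + Real.exp (2 * φ) * H φ +
          2 * Real.exp (2 * φ) * G φ + 3 * Real.exp (4 * φ) * f φ ^ 2 = δ ^ 2 ∧
      Real.exp φ * (F φ + G φ) + (1 / 2) * Real.exp (3 * φ) * f φ ^ 2 -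
          (2 / ℓ ^ 2) * Real.exp φ +
          (s / (2 * μ)) *
            (-s * (2 * μ / 3) * Real.exp φ * (F φ + G φ) +
              Real.exp (2 * φ) * f φ * H φ + 2 * Real.exp (2 * φ) * f φ * G φ +
              2 * Real.exp (4 * φ) * f φ ^ 3) = 0 := by
  have hFfun : F = fun φ : ℝ => -s * (2 / 3) * μ * δ * Real.exp (-φ) +
      (1 / 4) * δ ^ 2 * Real.exp (-(2 * φ)) + d := funext hF
  have hGfun : G = fun φ : ℝ => s * (2 / 3) * μ * δ * Real.exp (-φ) -
      (1 / 2) * δ ^ 2 * Real.exp (-(2 * φ)) := funext hG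
  intro φ
  have h1 : HasDerivAt (fun x : ℝ => Real.exp (-x)) (-Real.exp (-φ)) φ := by
    simpa using (hasDerivAt_neg φ).exp
  have h2 : HasDerivAt (fun x : ℝ => Real.exp (-(2 * x))) (-2 * Real.exp (-(2 * φ))) φ := by
    have : HasDerivAt (fun x : ℝ => -(2 * x)) (-2) φ := by
      simpa [Pi.neg_def] using ((hasDerivAt_id φ).const_mul (2 : ℝ)).neg
    simpa [mul_comm] using this.exp
  have hF' : HasDerivAt F (-s * (2 / 3) * μ * δ * (-Real.exp (-φ)) +
      (1 / 4) * δ ^ 2 * (-2 * Real.exp (-(2 * φ)))) φ := by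
    rw [hFfun]
    exact ((h1.const_mul _).add (h2.const_mul _)).add_const d
  have hG' : HasDerivAt G (s * (2 / 3) * μ * δ * (-Real.exp (-φ)) -
      (1 / 2) * δ ^ 2 * (-2 * Real.exp (-(2 * φ)))) φ := by
    rw [hGfun]
    exact (h1.const_mul _).sub (h2.const_mul _)
  have hE : Real.exp φ ≠ 0 := (Real.exp_pos φ).ne'
  have hl2 : ℓ ≠ 0 := hℓ.ne'
  have eneg : Real.exp (-φ) = (Real.exp φ)⁻¹ := Real.exp_neg φ
  have eneg2 : Real.exp (-(2 * φ)) = ((Real.exp φ) ^ 2)⁻¹ := by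
    rw [Real.exp_neg, ← Real.exp_nat_mul]; norm_num
  have e2 : Real.exp (2 * φ) = Real.exp φ ^ 2 := by
    rw [← Real.exp_nat_mul]; norm_num
  have e3 : Real.exp (3 * φ) = Real.exp φ ^ 3 := by
    rw [← Real.exp_nat_mul]; norm_num
  have e4 : Real.exp (4 * φ) = Real.exp φ ^ 4 := by
    rw [← Real.exp_nat_mul]; norm_num
  have hs2 : s ^ 2 = 1 := by rcases hs with h | h <;> simp [h]
  obtain ⟨E, hEdef, hEne⟩ : ∃ E : ℝ, Real.exp φ = E ∧ E ≠ 0 := ⟨Real.exp φ, rfl, hE⟩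
  refine ⟨?_, ?_, ?_, ?_, ?_⟩
  · rw [hF'.deriv, hG φ]; ring
  · rw [hG'.deriv, hH φ]; ring
  · rw [hH φ, hG φ, hF φ, hf φ, hd, eneg, eneg2, e2]
    rw [hEdef]
    rcases hs with h | h <;> subst h <;> field_simp <;> ring
  · rw [hH φ, hG φ, hf φ, eneg, eneg2, e2, e3, e4]
    rw [hEdef]
    rcases hs with h | h <;> subst h <;> field_simp <;> ring
  · rw [hH φ, hG φ, hF φ, hf φ, hd, eneg, eneg2, e2, e3, e4]
    rw [hEdef]
    rcases hs with h | h <;> subst h <;> field_simp <;> ring
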